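/- Let X be a resolving subcategory of K^{[-1,0]}(proj Λ). Then β(X) (defined as above) is a thick subcategory of K^{[-1,0]}(proj Λ): it is closed under direct summands, extensions, cones, and cocones of conflations. -/

import Mathlib

/-! **Statement 10.**  `K^{[-1,0]}(proj Λ)` is realized concretely as the full subcategory of
the homotopy category of cochain complexes of `Λ`-modules consisting of objects isomorphic to
complexes of finitely generated projective modules concentrated in degrees `-1, 0`; its
conflations are the distinguished triangles all of whose terms lie in this subcategory. -/

open CategoryTheory Limits Pretriangulated

namespace Stmt10

universe u
variable (Λ : Type u) [Ring Λ]

/-- The homotopy category of cochain complexes of `Λ`-modules. -/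
abbrev HtpyCat := HomotopyCategory (ModuleCat.{u} Λ) (ComplexShape.up ℤ)

/-- The subcategory `K^{[-1,0]}(proj Λ)`. -/
def KLam : Set (HtpyCat Λ) :=
  {X | ∃ C : CochainComplex (ModuleCat.{u} Λ) ℤ,
    (∀ i : ℤ, i ≠ -1 → i ≠ 0 → IsZero (C.X i)) ∧
    Module.Projective Λ (C.X (-1)) ∧ Module.Projective Λ (C.X 0) ∧
    Module.Finite Λ (C.X (-1)) ∧ Module.Finite Λ (C.X 0) ∧
    Nonempty (X ≅ (HomotopyCategory.quotient _ _).obj C)}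

/-- Conflations of `K^{[-1,0]}(proj Λ)`. -/
def IsConflation {X Y Z : HtpyCat Λ} (f : X ⟶ Y) (g : Y ⟶ Z) : Prop :=
  X ∈ KLam Λ ∧ Y ∈ KLam Λ ∧ Z ∈ KLam Λ ∧
    ∃ h : Z ⟶ X⟦(1 : ℤ)⟧, Triangle.mk f g h ∈ distTriang (HtpyCat Λ)

/-- `Z` is a direct sum of `A` and `B`. -/
def IsBiprodDecomp (Z A B : HtpyCat Λ) : Prop :=
  ∃ (iA : A ⟶ Z) (iB : B ⟶ Z) (pA : Z ⟶ A) (pB : Z ⟶ B),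
    iA ≫ pA = 𝟙 A ∧ iB ≫ pB = 𝟙 B ∧ iA ≫ pB = 0 ∧ iB ≫ pA = 0 ∧
      pA ≫ iA + pB ≫ iB = 𝟙 Z

/-- `X` is a resolving subcategory of `K^{[-1,0]}(proj Λ)`: it is closed under extensions,
cocones and direct summands, and every object of `K` is the cone of a conflation with middle
term in `X` (equivalently, `X` contains all projective objects). -/
def Resolving (X : Set (HtpyCat Λ)) : Prop :=
  X ⊆ KLam Λ ∧
  (∀ Z ∈ KLam Λ, ∃ (A B : HtpyCat Λ) (f : A ⟶ B) (g : B ⟶ Z),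
    A ∈ KLam Λ ∧ B ∈ X ∧ IsConflation Λ f g) ∧
  (∀ ⦃A B C : HtpyCat Λ⦄ (f : A ⟶ B) (g : B ⟶ C),
    IsConflation Λ f g → A ∈ X → C ∈ X → B ∈ X) ∧
  (∀ ⦃A B C : HtpyCat Λ⦄ (f : A ⟶ B) (g : B ⟶ C),
    IsConflation Λ f g → B ∈ X → C ∈ X → A ∈ X) ∧
  (∀ Z A B : HtpyCat Λ, IsBiprodDecomp Λ Z A B → Z ∈ X → A ∈ X)

/-- `β(X) = { X ∈ X : every conflation X ↣ X' ↠ X'' with X' ∈ X has X'' ∈ X }`. -/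
def beta (X : Set (HtpyCat Λ)) : Set (HtpyCat Λ) :=
  {A | A ∈ X ∧ ∀ ⦃B C : HtpyCat Λ⦄ (f : A ⟶ B) (g : B ⟶ C),
    IsConflation Λ f g → B ∈ X → C ∈ X}

variable {Λ}

lemma mem_KLam_of_iso {X Y : HtpyCat Λ} (e : X ≅ Y) (hY : Y ∈ KLam Λ) : X ∈ KLam Λ := by
  obtain ⟨C, h1, h2, h3, h4, h5, ⟨e'⟩⟩ := hY
  exact ⟨C, h1, h2, h3, h4, h5, ⟨e ≪≫ e'⟩⟩


lemma hom_shift_two_eq_zero {E A : HtpyCat Λ} (hE : E ∈ KLam Λ) (hA : A ∈ KLam Λ)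
    (φ : E ⟶ A⟦(2:ℤ)⟧) : φ = 0 := by
  obtain ⟨CE, hE0, -, -, -, -, ⟨eE⟩⟩ := hE
  obtain ⟨CA, hA0, -, -, -, -, ⟨eA⟩⟩ := hA
  set Q := HomotopyCategory.quotient (ModuleCat.{u} Λ) (ComplexShape.up ℤ) with hQ
  let ι : A⟦(2:ℤ)⟧ ≅ Q.obj (CA⟦(2:ℤ)⟧) :=
    (shiftFunctor (HtpyCat Λ) (2:ℤ)).mapIso eA ≪≫ ((Q.commShiftIso (2:ℤ)).app CA).symm
  obtain ⟨ψ, hψ⟩ := Q.map_surjective (eE.inv ≫ φ ≫ ι.hom)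
  have hψ0 : ψ = 0 := by
    apply HomologicalComplex.hom_ext
    intro i
    by_cases hi : i = -1 ∨ i = 0
    · refine (hA0 (i+2) (by omega) (by omega)).eq_of_tgt ?_ ?_
    · push_neg at hi
      exact (hE0 i hi.1 hi.2).eq_of_src _ _
  rw [hψ0, Functor.map_zero] at hψ
  have : φ = eE.hom ≫ (eE.inv ≫ φ ≫ ι.hom) ≫ ι.inv := by simp
  rw [this, ← hψ]
  simp


lemma hom_shift_zero' {E A : HtpyCat Λ} (hE : E ∈ KLam Λ) (hA : A ∈ KLam Λ)
    (x : E⟦(-1:ℤ)⟧ ⟶ A⟦(1:ℤ)⟧) : x = 0 := by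
  apply (shiftFunctor (HtpyCat Λ) (1:ℤ)).map_injective
  have h2 : ((shiftEquiv (HtpyCat Λ) (1:ℤ)).counitIso.app E).inv ≫
      (shiftFunctor (HtpyCat Λ) (1:ℤ)).map x ≫
      ((shiftFunctorAdd' (HtpyCat Λ) 1 1 2 (by norm_num)).symm.app A).hom = 0 :=
    hom_shift_two_eq_zero hE hA _
  rw [Functor.map_zero]
  have := congrArg (fun t => ((shiftEquiv (HtpyCat Λ) (1:ℤ)).counitIso.app E).hom ≫ t ≫
      ((shiftFunctorAdd' (HtpyCat Λ) 1 1 2 (by norm_num)).symm.app A).inv) h2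
  simp at this
  exact (cancel_mono _).1 (this.trans Limits.zero_comp.symm)

lemma isZero_biprod {M N : ModuleCat.{u} Λ} (hM : IsZero M) (hN : IsZero N) :
    IsZero (M ⊞ N : ModuleCat.{u} Λ) := by
  rw [IsZero.iff_id_eq_zero, ← biprod.total, hM.eq_of_tgt biprod.fst 0, hN.eq_of_tgt biprod.snd 0]
  simp

lemma projective_biprod {M N : ModuleCat.{u} Λ} (h1 : Module.Projective Λ M)
    (h2 : Module.Projective Λ N) : Module.Projective Λ ((M ⊞ N : ModuleCat.{u} Λ) : Type u) := by
  haveI := h1; haveI := h2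
  haveI : Module.Projective Λ ↑(ModuleCat.of Λ (Prod (M : Type u) (N : Type u))) :=
    (inferInstance : Module.Projective Λ (Prod (M : Type u) (N : Type u)))
  exact Module.Projective.of_equiv (ModuleCat.biprodIsoProd M N).toLinearEquiv.symm

lemma finite_biprod {M N : ModuleCat.{u} Λ} (h1 : Module.Finite Λ M)
    (h2 : Module.Finite Λ N) : Module.Finite Λ ((M ⊞ N : ModuleCat.{u} Λ) : Type u) := by
  haveI := h1; haveI := h2
  haveI : Module.Finite Λ ↑(ModuleCat.of Λ (Prod (M : Type u) (N : Type u))) :=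
    (inferInstance : Module.Finite Λ (Prod (M : Type u) (N : Type u)))
  exact Module.Finite.equiv (ModuleCat.biprodIsoProd M N).toLinearEquiv.symm


lemma KLam_ext {T : Triangle (HtpyCat Λ)} (hT : T ∈ distTriang (HtpyCat Λ))
    (h1 : T.obj₁ ∈ KLam Λ) (h3 : T.obj₃ ∈ KLam Λ) : T.obj₂ ∈ KLam Λ := by
  obtain ⟨C₁, g1, g2, g3, g4, g5, ⟨e₁⟩⟩ := h1
  obtain ⟨C₃, k1, k2, k3, k4, k5, ⟨e₃⟩⟩ := h3
  set Q := HomotopyCategory.quotient (ModuleCat.{u} Λ) (ComplexShape.up ℤ) with hQ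
  let D : CochainComplex (ModuleCat.{u} Λ) ℤ := C₃⟦(-1:ℤ)⟧
  let e₃' : Q.obj D ≅ T.obj₃⟦(-1:ℤ)⟧ :=
    (Q.commShiftIso (-1:ℤ)).app C₃ ≪≫ (shiftFunctor (HtpyCat Λ) (-1:ℤ)).mapIso e₃.symm
  have hT' : T.invRotate ∈ distTriang (HtpyCat Λ) := inv_rot_of_distTriang T hT
  obtain ⟨ψ, hψ⟩ := Q.map_surjective (e₃'.hom ≫ T.invRotate.mor₁ ≫ e₁.hom)
  have htri : CochainComplex.mappingCone.triangleh ψ ∈ distTriang (HtpyCat Λ) :=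
    ⟨D, C₁, ψ, ⟨Iso.refl _⟩⟩
  have comm : T.invRotate.mor₁ ≫ e₁.hom = e₃'.symm.hom ≫ (CochainComplex.mappingCone.triangleh ψ).mor₁ := by
    dsimp [CochainComplex.mappingCone.triangleh, Functor.mapTriangle, CochainComplex.mappingCone.triangle, Triangle.mk]
    rw [hψ]
    simp
    rfl
  let eT := isoTriangleOfIso₁₂ T.invRotate (CochainComplex.mappingCone.triangleh ψ) hT' htri
    e₃'.symm e₁ comm
  -- T.obj₂ ≅ Q.obj (mappingCone ψ)
  let eobj : T.obj₂ ≅ Q.obj (CochainComplex.mappingCone ψ) := Triangle.π₃.mapIso eT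
  refine ⟨CochainComplex.mappingCone ψ, ?_, ?_, ?_, ?_, ?_, ⟨eobj⟩⟩
  · intro i hi1 hi2
    refine IsZero.of_iso (isZero_biprod (k1 i hi1 hi2) (g1 i hi1 hi2)) ?_
    exact (HomologicalComplex.homotopyCofiber.XIsoBiprod ψ i (i+1) (by simp)) ≪≫
      biprod.mapIso (CochainComplex.shiftFunctorObjXIso C₃ (-1) (i+1) i (by omega)) (Iso.refl _)
  · have e : (CochainComplex.mappingCone ψ).X (-1) ≅ ((C₃.X (-1)) ⊞ (C₁.X (-1)) : ModuleCat.{u} Λ) :=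
      (HomologicalComplex.homotopyCofiber.XIsoBiprod ψ (-1) 0 (by simp)) ≪≫
      biprod.mapIso (CochainComplex.shiftFunctorObjXIso C₃ (-1) 0 (-1) (by omega)) (Iso.refl _)
    haveI := projective_biprod k2 g2
    exact Module.Projective.of_equiv e.symm.toLinearEquiv
  · have e : (CochainComplex.mappingCone ψ).X 0 ≅ ((C₃.X 0) ⊞ (C₁.X 0) : ModuleCat.{u} Λ) :=
      (HomologicalComplex.homotopyCofiber.XIsoBiprod ψ 0 1 (by simp)) ≪≫
      biprod.mapIso (CochainComplex.shiftFunctorObjXIso C₃ (-1) 1 0 (by omega)) (Iso.refl _)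
    haveI := projective_biprod k3 g3
    exact Module.Projective.of_equiv e.symm.toLinearEquiv
  · have e : (CochainComplex.mappingCone ψ).X (-1) ≅ ((C₃.X (-1)) ⊞ (C₁.X (-1)) : ModuleCat.{u} Λ) :=
      (HomologicalComplex.homotopyCofiber.XIsoBiprod ψ (-1) 0 (by simp)) ≪≫
      biprod.mapIso (CochainComplex.shiftFunctorObjXIso C₃ (-1) 0 (-1) (by omega)) (Iso.refl _)
    haveI := finite_biprod k4 g4
    exact Module.Finite.equiv e.symm.toLinearEquiv
  · have e : (CochainComplex.mappingCone ψ).X 0 ≅ ((C₃.X 0) ⊞ (C₁.X 0) : ModuleCat.{u} Λ) :=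
      (HomologicalComplex.homotopyCofiber.XIsoBiprod ψ 0 1 (by simp)) ≪≫
      biprod.mapIso (CochainComplex.shiftFunctorObjXIso C₃ (-1) 1 0 (by omega)) (Iso.refl _)
    haveI := finite_biprod k5 g5
    exact Module.Finite.equiv e.symm.toLinearEquiv

open ZeroObject in
lemma X_mem_of_iso {X : Set (HtpyCat Λ)}
    (hsum : ∀ Z A B : HtpyCat Λ, IsBiprodDecomp Λ Z A B → Z ∈ X → A ∈ X)
    {E E' : HtpyCat Λ} (e : E' ≅ E) (h : E' ∈ X) : E ∈ X := by
  refine hsum E' E 0 ⟨e.inv, 0, e.hom, 0, by simp, ?_, by simp, by simp, by simp⟩ h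
  exact (isZero_zero _).eq_of_src _ _

lemma isConflation_swap_decomp {Z A B : HtpyCat Λ} (d : IsBiprodDecomp Λ Z A B) :
    IsBiprodDecomp Λ Z B A := by
  obtain ⟨iA, iB, pA, pB, h1, h2, h3, h4, h5⟩ := d
  exact ⟨iB, iA, pB, pA, h2, h1, h4, h3, by rw [add_comm]; exact h5⟩

/-- From a distinguished triangle whose third object is identified with `B⟦1⟧`, produce a
conflation `B ↣ obj₁ ↠ obj₂`. -/
lemma exists_conflation {B : HtpyCat Λ} (T : Triangle (HtpyCat Λ))
    (hT : T ∈ distTriang (HtpyCat Λ)) (e : T.obj₃ ≅ B⟦(1:ℤ)⟧)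
    (h1 : B ∈ KLam Λ) (h2 : T.obj₁ ∈ KLam Λ) (h3 : T.obj₂ ∈ KLam Λ) :
    ∃ (f : B ⟶ T.obj₁) (g : T.obj₁ ⟶ T.obj₂), IsConflation Λ f g := by
  have hT' : Triangle.mk T.mor₁ (T.mor₂ ≫ e.hom) (e.inv ≫ T.mor₃) ∈ distTriang (HtpyCat Λ) := by
    refine isomorphic_distinguished _ hT _ ?_
    exact Triangle.isoMk _ _ (Iso.refl _) (Iso.refl _) e.symm (by simp [Triangle.mk]) (by simp [Triangle.mk]) (by simp [Triangle.mk])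
  have hT'' := inv_rot_of_distTriang _ hT'
  set ζ : B ≅ B⟦(1:ℤ)⟧⟦(-1:ℤ)⟧ := (shiftEquiv (HtpyCat Λ) (1:ℤ)).unitIso.app B with hζ
  set T₂ := (Triangle.mk T.mor₁ (T.mor₂ ≫ e.hom) (e.inv ≫ T.mor₃)).invRotate with hT₂
  have hfin : Triangle.mk (ζ.hom ≫ T₂.mor₁) T₂.mor₂
      (T₂.mor₃ ≫ (shiftFunctor (HtpyCat Λ) (1:ℤ)).map ζ.inv) ∈ distTriang (HtpyCat Λ) := by
    refine isomorphic_distinguished _ hT'' _ ?_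
    refine Triangle.isoMk _ _ ζ (Iso.refl _) (Iso.refl _) (Category.comp_id _) (by simp [Triangle.mk]) ?_
    dsimp [Triangle.mk]
    exact (Category.assoc _ _ _).trans ((congrArg (T₂.mor₃ ≫ ·) ((shiftFunctor (HtpyCat Λ) (1:ℤ)).mapIso ζ).inv_hom_id).trans ((Category.comp_id _).trans (Category.id_comp _).symm))
  exact ⟨ζ.hom ≫ T₂.mor₁, T₂.mor₂, h1, h2, h3, _, hfin⟩

lemma inr_fst_dist (X Y : HtpyCat Λ) :
    Triangle.mk (biprod.inr : Y ⟶ X ⊞ Y) biprod.fst 0 ∈ distTriang (HtpyCat Λ) := by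
  refine isomorphic_distinguished _ (binaryBiproductTriangle_distinguished Y X) _ ?_
  refine Triangle.isoMk _ _ (Iso.refl _) (biprod.braiding X Y) (Iso.refl _) ?_ ?_ (Limits.zero_comp.trans Limits.comp_zero.symm)
  · dsimp [Triangle.mk, binaryBiproductTriangle]; ext <;> simp
  · dsimp [Triangle.mk, binaryBiproductTriangle]; ext <;> simp

lemma beta_ext {X : Set (HtpyCat Λ)} (hX : Resolving Λ X)
    ⦃A B C : HtpyCat Λ⦄ (f : A ⟶ B) (g : B ⟶ C) (hc : IsConflation Λ f g)
    (hA : A ∈ beta Λ X) (hC : C ∈ beta Λ X) : B ∈ beta Λ X := by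
  obtain ⟨hsub, hres, hext, hcoc, hsum⟩ := hX
  obtain ⟨hAK, hBK, hCK, δ, hdist⟩ := hc
  have hBX : B ∈ X := hext f g ⟨hAK, hBK, hCK, δ, hdist⟩ hA.1 hC.1
  refine ⟨hBX, ?_⟩
  intro D E u v hc' hD
  obtain ⟨-, hDK, hEK, ε, hdist'⟩ := hc'
  obtain ⟨W, v13, w13, h13⟩ := distinguished_cocone_triangle (f ≫ u)
  have O := Triangulated.someOctahedron rfl hdist hdist' h13
  have hWK : W ∈ KLam Λ := KLam_ext O.mem hCK hEK
  have hWX : W ∈ X := hA.2 (f ≫ u) v13 ⟨hAK, hDK, hWK, w13, h13⟩ hD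
  exact hC.2 O.m₁ O.m₃ ⟨hCK, hWK, hEK, _, O.mem⟩ hWX

lemma beta_cocone {X : Set (HtpyCat Λ)} (hX : Resolving Λ X)
    ⦃A B C : HtpyCat Λ⦄ (f : A ⟶ B) (g : B ⟶ C) (hc : IsConflation Λ f g)
    (hB : B ∈ beta Λ X) (hC : C ∈ beta Λ X) : A ∈ beta Λ X := by
  obtain ⟨hsub, hres, hext, hcoc, hsum⟩ := hX
  obtain ⟨hAK, hBK, hCK, δ, hdist⟩ := hc
  have hAX : A ∈ X := hcoc f g ⟨hAK, hBK, hCK, δ, hdist⟩ hB.1 hC.1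
  refine ⟨hAX, ?_⟩
  intro D E u v hc' hD
  obtain ⟨-, hDK, hEK, ε, hdist'⟩ := hc'
  have hrot : Triangle.mk ((Triangle.mk u v ε).invRotate.mor₁) u
      (v ≫ (shiftEquiv (HtpyCat Λ) (1:ℤ)).counitIso.inv.app E) ∈ distTriang (HtpyCat Λ) :=
    inv_rot_of_distTriang _ hdist'
  obtain ⟨W, v13, w13, h13⟩ :=
    distinguished_cocone_triangle ((Triangle.mk u v ε).invRotate.mor₁ ≫ f)
  have O := Triangulated.someOctahedron rfl hrot hdist h13
  have hWK : W ∈ KLam Λ := by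
    refine KLam_ext (rot_of_distTriang _ h13) hBK (mem_KLam_of_iso ?_ hEK)
    exact (shiftEquiv (HtpyCat Λ) (1:ℤ)).counitIso.app E
  have hWX : W ∈ X := hext O.m₁ O.m₃ ⟨hDK, hWK, hCK, _, O.mem⟩ hD hC.1
  have hE'K : (E⟦(-1:ℤ)⟧)⟦(1:ℤ)⟧ ∈ KLam Λ :=
    mem_KLam_of_iso ((shiftEquiv (HtpyCat Λ) (1:ℤ)).counitIso.app E) hEK
  have hE'X : (E⟦(-1:ℤ)⟧)⟦(1:ℤ)⟧ ∈ X :=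
    hB.2 v13 w13 ⟨hBK, hWK, hE'K, _, rot_of_distTriang _ h13⟩ hWX
  exact X_mem_of_iso hsum ((shiftEquiv (HtpyCat Λ) (1:ℤ)).counitIso.app E) hE'X

lemma beta_summand {X : Set (HtpyCat Λ)} (hX : Resolving Λ X)
    (Z : HtpyCat Λ) (hZ : Z ∈ beta Λ X) (A B : HtpyCat Λ) (d : IsBiprodDecomp Λ Z A B) :
    A ∈ beta Λ X := by
  obtain ⟨hsub, hres, hext, hcoc, hsum⟩ := hX
  have hAX : A ∈ X := hsum Z A B d hZ.1
  have hBX : B ∈ X := hsum Z B A (isConflation_swap_decomp d) hZ.1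
  refine ⟨hAX, ?_⟩
  intro D E u v hc' hD
  obtain ⟨hAK, hDK, hEK, ε, hdist'⟩ := hc'
  have hBK := hsub hBX
  have hZK := hsub hZ.1
  have hDBdist := binaryBiproductTriangle_distinguished (C := HtpyCat Λ) D B
  have hDBK : (D ⊞ B : HtpyCat Λ) ∈ KLam Λ := KLam_ext hDBdist hDK hBK
  have hDBX : (D ⊞ B : HtpyCat Λ) ∈ X :=
    hext _ _ ⟨hDK, hDBK, hBK, _, hDBdist⟩ hD hBX
  obtain ⟨W, r, w, hW⟩ := distinguished_cocone_triangle (biprod.map u (𝟙 B) : A ⊞ B ⟶ D ⊞ B)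
  have O := Triangulated.someOctahedron (by simp) (inr_fst_dist A B) hW (inr_fst_dist D B)
  have hm : O.m₁ = u := by
    have h := O.comm₁
    calc O.m₁ = biprod.inl ≫ biprod.fst ≫ O.m₁ := by simp
    _ = biprod.inl ≫ biprod.map u (𝟙 B) ≫ biprod.fst := by rw [h]
    _ = u := by simp
  have hmem := O.mem
  rw [hm] at hmem
  have eEW : E ≅ W := Triangle.π₃.mapIso
    (isoTriangleOfIso₁₂ _ _ hdist' hmem (Iso.refl A) (Iso.refl D) (by simp [Triangle.mk]))
  have hWK : W ∈ KLam Λ := mem_KLam_of_iso eEW.symm hEK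
  obtain ⟨iA, iB, pA, pB, k1, k2, k3, k4, k5⟩ := d
  have eZ : Z ≅ (A ⊞ B : HtpyCat Λ) := by
    refine ⟨biprod.lift pA pB, biprod.desc iA iB, ?_, ?_⟩
    · rw [biprod.lift_desc, k5]
    · apply biprod.hom_ext' <;> apply biprod.hom_ext <;>
        simp [reassoc_of% k1, reassoc_of% k2, reassoc_of% k3, reassoc_of% k4, k1, k2, k3, k4]
  have hq : Triangle.mk (eZ.hom ≫ biprod.map u (𝟙 B)) r
      (w ≫ (shiftFunctor (HtpyCat Λ) (1:ℤ)).map eZ.inv) ∈ distTriang (HtpyCat Λ) := by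
    refine isomorphic_distinguished _ hW _ ?_
    refine Triangle.isoMk _ _ eZ (Iso.refl _) (Iso.refl _) (by simp [Triangle.mk]) (by simp [Triangle.mk]) ?_
    dsimp [Triangle.mk]
    simp [← Functor.map_comp]
  have hWX : W ∈ X := hZ.2 _ _ ⟨hZK, hDBK, hWK, _, hq⟩ hDBX
  exact X_mem_of_iso hsum eEW.symm hWX

lemma beta_cone {X : Set (HtpyCat Λ)} (hX : Resolving Λ X)
    ⦃A B C : HtpyCat Λ⦄ (f : A ⟶ B) (g : B ⟶ C) (hc : IsConflation Λ f g)
    (hA : A ∈ beta Λ X) (hB : B ∈ beta Λ X) : C ∈ beta Λ X := by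
  obtain ⟨hsub, hres, hext, hcoc, hsum⟩ := hX
  obtain ⟨hAK, hBK, hCK, δ, hdist⟩ := hc
  have hCX : C ∈ X := hA.2 f g ⟨hAK, hBK, hCK, δ, hdist⟩ hB.1
  refine ⟨hCX, ?_⟩
  intro D E u v hc' hD
  obtain ⟨-, hDK, hEK, δ', hdist'⟩ := hc'
  -- extend δ along u, using heredity
  have hx : (Triangle.mk u v δ').invRotate.mor₁ ≫ δ = 0 := hom_shift_zero' hEK hAK _
  obtain ⟨ε, hε⟩ := Triangle.yoneda_exact₂ _ (inv_rot_of_distTriang _ hdist') δ hx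
  have hε' : δ = u ≫ ε := hε
  obtain ⟨B', f', g', hB'⟩ := distinguished_cocone_triangle₂ ε
  have hB'K : B' ∈ KLam Λ := KLam_ext hB' hAK hDK
  have hB'X : B' ∈ X := hext f' g' ⟨hAK, hB'K, hDK, _, hB'⟩ hA.1 hD
  -- octahedron on g' ≫ v
  obtain ⟨W, m, wm, hWt⟩ := distinguished_cocone_triangle (g' ≫ v)
  have hrot1 : Triangle.mk g' ε (-(shiftFunctor (HtpyCat Λ) (1:ℤ)).map f') ∈
      distTriang (HtpyCat Λ) := rot_of_distTriang _ hB'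
  have hrot2 : Triangle.mk v δ' (-(shiftFunctor (HtpyCat Λ) (1:ℤ)).map u) ∈
      distTriang (HtpyCat Λ) := rot_of_distTriang _ hdist'
  have O := Triangulated.someOctahedron rfl hrot1 hrot2 hWt
  have hmem := O.mem
  have h3 : (-(shiftFunctor (HtpyCat Λ) (1:ℤ)).map u) ≫ (shiftFunctor (HtpyCat Λ) (1:ℤ)).map ε
      = -(shiftFunctor (HtpyCat Λ) (1:ℤ)).map δ := by
    exact (Preadditive.neg_comp _ _).trans (congrArg Neg.neg (((shiftFunctor (HtpyCat Λ) (1:ℤ)).map_comp u ε).symm.trans (congrArg _ hε'.symm)))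
  replace hmem := Eq.mp (congrArg (fun t => Triangle.mk O.m₁ O.m₃ t ∈ distTriang (HtpyCat Λ)) h3) hmem
  -- identify W with B⟦1⟧
  have hrr : Triangle.mk δ (-(shiftFunctor (HtpyCat Λ) (1:ℤ)).map f)
      (-(shiftFunctor (HtpyCat Λ) (1:ℤ)).map g) ∈ distTriang (HtpyCat Λ) :=
    rot_of_distTriang _ (rot_of_distTriang _ hdist)
  have hinv := inv_rot_of_distTriang _ hmem
  have hnat := (shiftEquiv (HtpyCat Λ) (1:ℤ)).unitIso.inv.naturality δ
  have comm : (Triangle.mk O.m₁ O.m₃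
        (-(shiftFunctor (HtpyCat Λ) (1:ℤ)).map δ)).invRotate.mor₁ ≫ (Iso.refl (A⟦(1:ℤ)⟧)).hom
      = ((shiftEquiv (HtpyCat Λ) (1:ℤ)).unitIso.app C).symm.hom ≫ δ := by
    dsimp [Triangle.mk] at hnat ⊢
    simp
    exact (Category.comp_id _).trans ((shiftFunctorCompIsoId (HtpyCat Λ) (1:ℤ) (-1) (by norm_num : (1:ℤ) + (-1) = 0)).hom.naturality δ)
  have eta : W ≅ B⟦(1:ℤ)⟧ := Triangle.π₃.mapIso
    (isoTriangleOfIso₁₂ _ _ hinv hrr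
      ((shiftEquiv (HtpyCat Λ) (1:ℤ)).unitIso.app C).symm (Iso.refl _) comm)
  obtain ⟨p, q, hconf⟩ := exists_conflation (Triangle.mk (g' ≫ v) m wm) hWt eta
    (hsub hB.1) hB'K hEK
  exact hB.2 p q hconf hB'X

variable (Λ)

/-- If `X` is a resolving subcategory of `K^{[-1,0]}(proj Λ)`, then
`β(X)` is a thick subcategory: it is closed under direct summands, extensions, cones and
cocones of conflations. -/
theorem stmt10 (X : Set (HtpyCat Λ)) (hX : Resolving Λ X) :
    (∀ Z ∈ beta Λ X, ∀ A B : HtpyCat Λ, IsBiprodDecomp Λ Z A B → A ∈ beta Λ X) ∧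
    (∀ ⦃A B C : HtpyCat Λ⦄ (f : A ⟶ B) (g : B ⟶ C), IsConflation Λ f g →
      A ∈ beta Λ X → C ∈ beta Λ X → B ∈ beta Λ X) ∧
    (∀ ⦃A B C : HtpyCat Λ⦄ (f : A ⟶ B) (g : B ⟶ C), IsConflation Λ f g →
      A ∈ beta Λ X → B ∈ beta Λ X → C ∈ beta Λ X) ∧
    (∀ ⦃A B C : HtpyCat Λ⦄ (f : A ⟶ B) (g : B ⟶ C), IsConflation Λ f g →
      B ∈ beta Λ X → C ∈ beta Λ X → A ∈ beta Λ X) := by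
  refine ⟨?_, ?_, ?_, ?_⟩
  · exact fun Z hZ A B d => beta_summand hX Z hZ A B d
  · intro A B C f g hc hA hC
    exact beta_ext hX f g hc hA hC
  · intro A B C f g hc hA hB
    exact beta_cone hX f g hc hA hB
  · intro A B C f g hc hB hC
    exact beta_cocone hX f g hc hB hC

end Stmt10
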